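/- Let q : V → W and r : V → W be linear maps of finite-dimensional ℂ-vector spaces with dim V = dim W, and assume the Laurent-polynomial determinant det(q − t·r) is nonzero. If both the degree-0 coefficient condition (det q ≠ 0 follows from q being an isomorphism) and the top coefficient condition hold — i.e., q and r are isomorphisms — then the cokernel of q ⊗ 1 − t·(r ⊗ 1) : V ⊗ ℂ[t,t⁻¹] → W ⊗ ℂ[t,t⁻¹] is a torsion ℂ[t,t⁻¹]-module of finite dimension over ℂ equal to dim V. -/

import Mathlib

open LaurentPolynomial

namespace Stmt17Aux

noncomputable section

variable {n : ℕ}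

def ev (Cu : (Matrix (Fin n) (Fin n) ℂ)ˣ) :
    LaurentPolynomial ℂ →ₐ[ℂ] Matrix (Fin n) (Fin n) ℂ :=
  AddMonoidAlgebra.lift ℂ _ ℤ
    ((Units.coeHom (Matrix (Fin n) (Fin n) ℂ)).comp ((zpowersHom _) Cu))

lemma ev_single (Cu : (Matrix (Fin n) (Fin n) ℂ)ˣ) (k : ℤ) (a : ℂ) :
    ev Cu (C a * T k)
      = a • ((Cu ^ k : (Matrix (Fin n) (Fin n) ℂ)ˣ) : Matrix (Fin n) (Fin n) ℂ) := by
  rw [← single_eq_C_mul_T]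
  have h := AddMonoidAlgebra.lift_single
    ((Units.coeHom (Matrix (Fin n) (Fin n) ℂ)).comp ((zpowersHom ((Matrix (Fin n) (Fin n) ℂ)ˣ)) Cu))
    k a
  exact h.trans (by simp [zpowersHom_apply])

lemma ev_C (Cu : (Matrix (Fin n) (Fin n) ℂ)ˣ) (a : ℂ) :
    ev Cu (C a) = a • (1 : Matrix (Fin n) (Fin n) ℂ) := by
  have := ev_single Cu 0 a
  simpa using this

set_option maxHeartbeats 1000000 in
theorem aux (A B : Matrix (Fin n) (Fin n) ℂ) (hA : IsUnit A) (hB : IsUnit B) :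
    Module.IsTorsion (LaurentPolynomial ℂ)
      ((Fin n → LaurentPolynomial ℂ) ⧸ LinearMap.range
        ((A.map (LaurentPolynomial.C (R := ℂ)) -
          (LaurentPolynomial.T (R := ℂ) 1) • B.map (LaurentPolynomial.C (R := ℂ))).mulVecLin)) ∧
    Nonempty ((RestrictScalars ℂ (LaurentPolynomial ℂ)
      ((Fin n → LaurentPolynomial ℂ) ⧸ LinearMap.range
        ((A.map (LaurentPolynomial.C (R := ℂ)) -
          (LaurentPolynomial.T (R := ℂ) 1) • B.map (LaurentPolynomial.C (R := ℂ))).mulVecLin)))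
      ≃ₗ[ℂ] (Fin n → ℂ)) := by
  set Mx : Matrix (Fin n) (Fin n) (LaurentPolynomial ℂ) :=
    A.map (LaurentPolynomial.C (R := ℂ)) -
      (LaurentPolynomial.T (R := ℂ) 1) • B.map (LaurentPolynomial.C (R := ℂ)) with hMx
  set ρ : Submodule (LaurentPolynomial ℂ) (Fin n → LaurentPolynomial ℂ) :=
    LinearMap.range Mx.mulVecLin with hρ
  -- determinant is nonzero
  have hdet : Mx.det ≠ 0 := by
    set P : Matrix (Fin n) (Fin n) (Polynomial ℂ) :=
      A.map Polynomial.C - (Polynomial.X : Polynomial ℂ) • B.map Polynomial.C with hP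
    have hmap : Mx = P.map Polynomial.toLaurent := by
      ext i j
      simp [hP, hMx, Matrix.map_apply, Matrix.sub_apply, Matrix.smul_apply, smul_eq_mul]
    have hAdet : A.det ≠ 0 := ((Matrix.isUnit_iff_isUnit_det A).mp hA).ne_zero
    have hPdet : P.det ≠ 0 := by
      intro h0
      have h1 : (Polynomial.evalRingHom (0:ℂ)) P.det = A.det := by
        rw [RingHom.map_det]
        congr 1
        ext i j
        simp [hP, Matrix.map_apply, Matrix.sub_apply, Matrix.smul_apply, smul_eq_mul]
      rw [h0, map_zero] at h1
      exact hAdet h1.symm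
    have h2 : Mx.det = Polynomial.toLaurent P.det := by
      rw [hmap, RingHom.map_det, RingHom.mapMatrix_apply]
    rw [h2]
    exact Polynomial.toLaurent_ne_zero.mpr hPdet
  have torsion : Module.IsTorsion (LaurentPolynomial ℂ)
      ((Fin n → LaurentPolynomial ℂ) ⧸ ρ) := by
    intro x
    obtain ⟨v, rfl⟩ := Submodule.Quotient.mk_surjective ρ x
    refine ⟨⟨Mx.det, mem_nonZeroDivisors_of_ne_zero hdet⟩, ?_⟩
    have : Mx.det • v ∈ ρ := by
      refine ⟨Mx.adjugate.mulVec v, ?_⟩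
      rw [Matrix.mulVecLin_apply, Matrix.mulVec_mulVec, Matrix.mul_adjugate,
        Matrix.smul_mulVec, Matrix.one_mulVec]
    rw [Submonoid.mk_smul, ← Submodule.Quotient.mk_smul, Submodule.Quotient.mk_eq_zero]
    exact this
  refine ⟨torsion, ?_⟩
  -- setup: units and the evaluation map
  set Cu : (Matrix (Fin n) (Fin n) ℂ)ˣ := hA.unit * hB.unit⁻¹ with hCu
  have hCuval : (Cu : Matrix (Fin n) (Fin n) ℂ) = A * (↑hB.unit⁻¹ : Matrix (Fin n) (Fin n) ℂ) := by
    rw [hCu, Units.val_mul, hA.unit_spec]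
  have hCuB : (Cu : Matrix (Fin n) (Fin n) ℂ) * B = A := by
    rw [hCuval, mul_assoc, hB.val_inv_mul, mul_one]
  set ι : (Fin n → ℂ) →ₗ[ℂ] (Fin n → LaurentPolynomial ℂ) :=
    (Algebra.linearMap ℂ (LaurentPolynomial ℂ)).compLeft (Fin n) with hι
  have hιapp : ∀ (w : Fin n → ℂ) (j : Fin n), ι w j = C (w j) := fun w j => rfl
  set ψ : (Fin n → LaurentPolynomial ℂ) →ₗ[ℂ] (Fin n → ℂ) :=
    { toFun := fun v => ∑ j, (ev Cu (v j)).mulVec (Pi.single j 1)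
      map_add' := by
        intro v w
        simp only [Pi.add_apply, map_add, Matrix.add_mulVec]
        rw [Finset.sum_add_distrib]
      map_smul' := by
        intro c v
        simp only [Pi.smul_apply, map_smul, Matrix.smul_mulVec, RingHom.id_apply]
        rw [Finset.smul_sum] } with hψ
  have hψapp : ∀ v, ψ v = ∑ j, (ev Cu (v j)).mulVec (Pi.single j 1) := fun v => rfl
  -- ψ ∘ ι = id
  have hψι : ∀ w, ψ (ι w) = w := by
    intro w
    rw [hψapp]
    have h1 : ∀ j : Fin n, (ev Cu (ι w j)).mulVec (Pi.single j 1) = Pi.single j (w j) := by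
      intro j
      rw [hιapp, ev_C, Matrix.smul_mulVec, Matrix.one_mulVec, ← Pi.single_smul, smul_eq_mul,
        mul_one]
    simp only [h1]
    exact Finset.univ_sum_single w
  -- ψ is semilinear over ev
  have hmulVec_sum : ∀ (N : Matrix (Fin n) (Fin n) ℂ) (f : Fin n → Fin n → ℂ),
      N.mulVec (∑ j, f j) = ∑ j, N.mulVec (f j) := by
    intro N f
    have := map_sum N.mulVecLin f Finset.univ
    simpa only [Matrix.mulVecLin_apply] using this
  have hψsmul : ∀ (p : LaurentPolynomial ℂ) v, ψ (p • v) = (ev Cu p).mulVec (ψ v) := by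
    intro p v
    rw [hψapp, hψapp, hmulVec_sum]
    refine Finset.sum_congr rfl fun j _ => ?_
    rw [Pi.smul_apply, smul_eq_mul, map_mul, ← Matrix.mulVec_mulVec]
  -- entries of Mx
  have hMentry : ∀ j l, Mx j l = C (A j l) - T 1 * C (B j l) := by
    intro j l
    rw [hMx]
    simp [Matrix.sub_apply, Matrix.smul_apply, Matrix.map_apply, smul_eq_mul]
  have hTC : ∀ (b : ℂ), ev Cu (T 1 * C b) = b • (Cu : Matrix (Fin n) (Fin n) ℂ) := by
    intro b
    rw [mul_comm]
    have := ev_single Cu 1 b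
    simpa using this
  have hcolsum : ∀ (N : Matrix (Fin n) (Fin n) ℂ) (l : Fin n),
      ∑ j, N j l • (Pi.single j (1:ℂ) : Fin n → ℂ) = N.mulVec (Pi.single l 1) := by
    intro N l
    ext i
    rw [Finset.sum_apply, Matrix.mulVec_single]
    simp [Pi.single_apply]
  -- ψ kills the columns of Mx
  have hψcol : ∀ l, ψ (fun j => Mx j l) = 0 := by
    intro l
    rw [hψapp]
    have h1 : ∀ j, (ev Cu (Mx j l)).mulVec (Pi.single j 1)
        = A j l • (Pi.single j (1:ℂ) : Fin n → ℂ) - B j l • (Cu : Matrix (Fin n) (Fin n) ℂ).mulVec (Pi.single j 1) := by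
      intro j
      rw [hMentry, map_sub, ev_C, hTC, Matrix.sub_mulVec, Matrix.smul_mulVec,
        Matrix.smul_mulVec, Matrix.one_mulVec]
    simp only [h1]
    rw [Finset.sum_sub_distrib, hcolsum]
    have h2 : ∑ j, B j l • (Cu : Matrix (Fin n) (Fin n) ℂ).mulVec (Pi.single j 1)
        = (Cu : Matrix (Fin n) (Fin n) ℂ).mulVec (B.mulVec (Pi.single l 1)) := by
      rw [← hcolsum B l, hmulVec_sum]
      refine Finset.sum_congr rfl fun j _ => ?_
      rw [Matrix.mulVec_smul]
    rw [h2, Matrix.mulVec_mulVec, hCuB, sub_self]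
  -- range Mx ⊆ ker ψ
  have hrange_ker : ∀ x, ψ (Mx.mulVec x) = 0 := by
    intro x
    have hx : Mx.mulVec x = ∑ l, x l • (fun j => Mx j l) := by
      funext j
      rw [Finset.sum_apply]
      show (∑ l, Mx j l * x l) = _
      refine Finset.sum_congr rfl fun l _ => ?_
      rw [Pi.smul_apply, smul_eq_mul, mul_comm]
    rw [hx, map_sum]
    have : ∀ l, ψ (x l • fun j => Mx j l) = 0 := by
      intro l
      rw [hψsmul, hψcol, Matrix.mulVec_zero]
    simp [this]
  -- key congruence relation
  have hMι : ∀ u : Fin n → ℂ, Mx.mulVec (ι u) = ι (A.mulVec u) - T (R := ℂ) 1 • ι (B.mulVec u) := by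
    intro u
    have hmm : ∀ (N : Matrix (Fin n) (Fin n) ℂ),
        (N.map (LaurentPolynomial.C (R := ℂ))).mulVec (ι u) = ι (N.mulVec u) := by
      intro N
      funext j
      rw [hιapp]
      show (∑ l, C (N j l) * ι u l) = C (∑ l, N j l * u l)
      rw [map_sum]
      refine Finset.sum_congr rfl fun l _ => ?_
      rw [hιapp, map_mul]
    rw [hMx, Matrix.sub_mulVec, Matrix.smul_mulVec, hmm, hmm]
  have hkey : ∀ w : Fin n → ℂ,
      ι ((Cu : Matrix (Fin n) (Fin n) ℂ).mulVec w) - T (R := ℂ) 1 • ι w ∈ ρ := by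
    intro w
    refine ⟨ι ((↑hB.unit⁻¹ : Matrix (Fin n) (Fin n) ℂ).mulVec w), ?_⟩
    rw [Matrix.mulVecLin_apply, hMι, Matrix.mulVec_mulVec, Matrix.mulVec_mulVec, ← hCuval,
      hB.mul_val_inv, Matrix.one_mulVec]
  have hπ : ∀ (p : LaurentPolynomial ℂ) (w : Fin n → ℂ),
      ρ.mkQ (p • (T (R := ℂ) 1 • ι w)) = ρ.mkQ (p • ι ((Cu : Matrix (Fin n) (Fin n) ℂ).mulVec w)) := by
    intro p w
    rw [Submodule.mkQ_apply, Submodule.mkQ_apply, Submodule.Quotient.eq]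
    have h1 := ρ.smul_mem p (hkey w)
    have h2 := ρ.neg_mem h1
    rw [smul_sub, neg_sub] at h2
    exact h2
  -- iterate the congruence
  have hG : ∀ (k : ℤ) (w : Fin n → ℂ),
      ρ.mkQ (T (R := ℂ) k • ι w)
        = ρ.mkQ (ι (((Cu ^ k : (Matrix (Fin n) (Fin n) ℂ)ˣ) : Matrix (Fin n) (Fin n) ℂ).mulVec w)) := by
    intro k
    induction k using Int.induction_on with
    | zero =>
      intro w
      simp [Matrix.one_mulVec]
    | succ k ih =>
      intro w
      have h1 : (T (R := ℂ) ((k : ℤ) + 1)) = T (R := ℂ) k * T 1 := T_add k 1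
      rw [h1, mul_smul, hπ (T (R := ℂ) k) w, ih ((Cu : Matrix (Fin n) (Fin n) ℂ).mulVec w)]
      congr 2
      rw [Matrix.mulVec_mulVec, ← Units.val_mul, ← zpow_add_one]
    | pred k ih =>
      intro w
      set w' : Fin n → ℂ := ((Cu⁻¹ : (Matrix (Fin n) (Fin n) ℂ)ˣ) : Matrix (Fin n) (Fin n) ℂ).mulVec w with hw'
      have hw : ((Cu : (Matrix (Fin n) (Fin n) ℂ)ˣ) : Matrix (Fin n) (Fin n) ℂ).mulVec w' = w := by
        rw [hw', Matrix.mulVec_mulVec, ← Units.val_mul, mul_inv_cancel, Units.val_one,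
          Matrix.one_mulVec]
      calc ρ.mkQ (T (R := ℂ) (-(k : ℤ) - 1) • ι w)
          = ρ.mkQ (T (R := ℂ) (-(k : ℤ) - 1) • ι (((Cu : (Matrix (Fin n) (Fin n) ℂ)ˣ) : Matrix (Fin n) (Fin n) ℂ).mulVec w')) := by
            rw [hw]
        _ = ρ.mkQ (T (R := ℂ) (-(k : ℤ) - 1) • (T (R := ℂ) 1 • ι w')) := (hπ _ w').symm
        _ = ρ.mkQ (T (R := ℂ) (-(k : ℤ)) • ι w') := by
            rw [← mul_smul, ← T_add]
            norm_num
        _ = ρ.mkQ (ι (((Cu ^ (-(k : ℤ)) : (Matrix (Fin n) (Fin n) ℂ)ˣ) : Matrix (Fin n) (Fin n) ℂ).mulVec w')) := ih w'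
        _ = ρ.mkQ (ι (((Cu ^ (-(k : ℤ) - 1) : (Matrix (Fin n) (Fin n) ℂ)ˣ) : Matrix (Fin n) (Fin n) ℂ).mulVec w)) := by
            rw [hw', Matrix.mulVec_mulVec, ← Units.val_mul, ← zpow_sub_one]
  -- ψ on single vectors
  have hψsingle : ∀ (j : Fin n) (p : LaurentPolynomial ℂ),
      ψ (Pi.single j p) = (ev Cu p).mulVec (Pi.single j 1) := by
    intro j p
    rw [hψapp, Finset.sum_eq_single j]
    · rw [Pi.single_eq_same]
    · intro b _ hb
      rw [Pi.single_eq_of_ne hb, map_zero, Matrix.zero_mulVec]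
    · intro h
      exact absurd (Finset.mem_univ j) h
  -- every vector is congruent to a constant vector mod ρ
  have hcong : ∀ v, ρ.mkQ v = ρ.mkQ (ι (ψ v)) := by
    have hsingle : ∀ (j : Fin n) (p : LaurentPolynomial ℂ),
        ρ.mkQ (Pi.single j p) = ρ.mkQ (ι (ψ (Pi.single j p))) := by
      intro j p
      induction p using LaurentPolynomial.induction_on' with
      | add p q hp hq =>
        have hps : (Pi.single j (p + q) : Fin n → LaurentPolynomial ℂ)
            = Pi.single j p + Pi.single j q := by
          rw [Pi.single_add]
        rw [hps, map_add, map_add, map_add, map_add, hp, hq]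
      | C_mul_T k a =>
        have h1 : (Pi.single j (C a * T k) : Fin n → LaurentPolynomial ℂ)
            = a • (T (R := ℂ) k • ι (Pi.single j (1 : ℂ))) := by
          funext i
          rcases eq_or_ne i j with rfl | h
          · rw [Pi.single_eq_same, Pi.smul_apply, Pi.smul_apply, hιapp, Pi.single_eq_same,
              map_one, smul_eq_mul, mul_one, Algebra.smul_def, ← C_eq_algebraMap]
          · rw [Pi.single_eq_of_ne h, Pi.smul_apply, Pi.smul_apply, hιapp, Pi.single_eq_of_ne h,
              map_zero, smul_eq_mul, mul_zero, smul_zero]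
        have h2 : ψ (Pi.single j (C a * T k))
            = a • (((Cu ^ k : (Matrix (Fin n) (Fin n) ℂ)ˣ) : Matrix (Fin n) (Fin n) ℂ).mulVec (Pi.single j 1)) := by
          rw [hψsingle, ev_single, Matrix.smul_mulVec]
        calc ρ.mkQ (Pi.single j (C a * T k))
            = a • ρ.mkQ (T (R := ℂ) k • ι (Pi.single j (1 : ℂ))) := by
              rw [h1, Submodule.mkQ_apply, Submodule.mkQ_apply, Submodule.Quotient.mk_smul]
          _ = a • ρ.mkQ (ι (((Cu ^ k : (Matrix (Fin n) (Fin n) ℂ)ˣ) : Matrix (Fin n) (Fin n) ℂ).mulVec (Pi.single j 1))) := by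
              rw [hG k (Pi.single j (1 : ℂ))]
          _ = ρ.mkQ (ι (ψ (Pi.single j (C a * T k)))) := by
              rw [h2, map_smul, Submodule.mkQ_apply, Submodule.mkQ_apply,
                Submodule.Quotient.mk_smul]
    intro v
    have hv : v = ∑ j, Pi.single j (v j) := (Finset.univ_sum_single v).symm
    calc ρ.mkQ v = ∑ j, ρ.mkQ (Pi.single j (v j)) := by
          conv_lhs => rw [hv]
          rw [map_sum]
      _ = ∑ j, ρ.mkQ (ι (ψ (Pi.single j (v j)))) :=
          Finset.sum_congr rfl fun j _ => hsingle j (v j)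
      _ = ρ.mkQ (ι (ψ v)) := by
          rw [← map_sum, ← map_sum, ← map_sum]
          conv_rhs => rw [hv]
  -- the kernel of ψ is exactly ρ
  have hker : LinearMap.ker ψ = ρ.restrictScalars ℂ := by
    ext v
    rw [LinearMap.mem_ker, Submodule.restrictScalars_mem]
    constructor
    · intro hv
      have h1 := hcong v
      rw [hv, map_zero, map_zero] at h1
      rw [Submodule.mkQ_apply, Submodule.Quotient.mk_eq_zero] at h1
      exact h1
    · rintro ⟨x, rfl⟩
      rw [Matrix.mulVecLin_apply]
      exact hrange_ker x
  have hsurj : Function.Surjective ψ := fun w => ⟨ι w, hψι w⟩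
  have e3 : RestrictScalars ℂ (LaurentPolynomial ℂ) ((Fin n → LaurentPolynomial ℂ) ⧸ ρ)
      ≃ₗ[ℂ] ((Fin n → LaurentPolynomial ℂ) ⧸ ρ) :=
    { RestrictScalars.addEquiv ℂ (LaurentPolynomial ℂ) _ with
      map_smul' := fun c x => by
        show RestrictScalars.addEquiv ℂ (LaurentPolynomial ℂ) _ (c • x) = _
        rw [RestrictScalars.addEquiv_map_smul]
        exact algebraMap_smul (LaurentPolynomial ℂ) c _ }
  refine ⟨?_⟩
  exact (e3.trans
    ((Submodule.Quotient.restrictScalarsEquiv ℂ ρ).symm.trans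
      ((Submodule.quotEquivOfEq _ _ hker.symm).trans (ψ.quotKerEquivOfSurjective hsurj))))

end

end Stmt17Aux


/-- Let `q, r : V → W` be linear isomorphisms of finite-dimensional complex vector spaces of
the same dimension `n`, with matrices `A`, `B` in chosen bases. Then the cokernel of
`q ⊗ 1 − t·(r ⊗ 1)`, i.e. of the matrix `A − t·B` acting on `ℂ[t,t⁻¹]ⁿ`, is a torsion
`ℂ[t,t⁻¹]`-module which is finite-dimensional over `ℂ` of dimension `n = dim V`. -/
theorem stmt_17 {V W : Type*} [AddCommGroup V] [Module ℂ V] [AddCommGroup W] [Module ℂ W]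
    {n : ℕ} (bV : Module.Basis (Fin n) ℂ V) (bW : Module.Basis (Fin n) ℂ W)
    (q r : V →ₗ[ℂ] W) (hq : Function.Bijective q) (hr : Function.Bijective r) :
    Module.IsTorsion (LaurentPolynomial ℂ)
      ((Fin n → LaurentPolynomial ℂ) ⧸ LinearMap.range
        (((LinearMap.toMatrix bV bW q).map (LaurentPolynomial.C (R := ℂ)) -
          (LaurentPolynomial.T (R := ℂ) 1) •
            (LinearMap.toMatrix bV bW r).map (LaurentPolynomial.C (R := ℂ))).mulVecLin)) ∧
    Module.Finite ℂ (RestrictScalars ℂ (LaurentPolynomial ℂ)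
      ((Fin n → LaurentPolynomial ℂ) ⧸ LinearMap.range
        (((LinearMap.toMatrix bV bW q).map (LaurentPolynomial.C (R := ℂ)) -
          (LaurentPolynomial.T (R := ℂ) 1) •
            (LinearMap.toMatrix bV bW r).map (LaurentPolynomial.C (R := ℂ))).mulVecLin))) ∧
    Module.finrank ℂ (RestrictScalars ℂ (LaurentPolynomial ℂ)
      ((Fin n → LaurentPolynomial ℂ) ⧸ LinearMap.range
        (((LinearMap.toMatrix bV bW q).map (LaurentPolynomial.C (R := ℂ)) -
          (LaurentPolynomial.T (R := ℂ) 1) •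
            (LinearMap.toMatrix bV bW r).map (LaurentPolynomial.C (R := ℂ))).mulVecLin))) =
      Module.finrank ℂ V := by
  classical
  have unit_of_bij : ∀ (f : V →ₗ[ℂ] W), Function.Bijective f →
      IsUnit (LinearMap.toMatrix bV bW f) := by
    intro f hf
    let e := LinearEquiv.ofBijective f hf
    have h1 : LinearMap.toMatrix bV bW f * LinearMap.toMatrix bW bV (e.symm : W →ₗ[ℂ] V) = 1 := by
      rw [← LinearMap.toMatrix_comp bW bV bW]
      have h2 : f ∘ₗ (e.symm : W →ₗ[ℂ] V) = LinearMap.id := by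
        ext w
        exact e.apply_symm_apply w
      rw [h2, LinearMap.toMatrix_id]
    letI := invertibleOfRightInverse _ _ h1
    exact isUnit_of_invertible _
  obtain ⟨ht, ⟨eq⟩⟩ := Stmt17Aux.aux (LinearMap.toMatrix bV bW q) (LinearMap.toMatrix bV bW r)
    (unit_of_bij q hq) (unit_of_bij r hr)
  refine ⟨ht, Module.Finite.equiv eq.symm, ?_⟩
  rw [eq.finrank_eq, Module.finrank_eq_card_basis bV]
  exact Module.finrank_pi ℂ
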